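/- Let $p = 2q$ with $16 q \ell^2 \le 1$, let $\gamma \in (0,1/2]$, $m_0 = \lfloor\log_2(1/\gamma)\rfloor$, and let $\ell_s, \ell_t \le 2\ell$ be positive integers. Let $P = \mathrm{Binomial}(\ell_s\ell_t, p)$, $Q = \mathrm{Binomial}(\ell_s\ell_t, q)$. Define $P'(m) = P(m) + a$ for $m=0$, $P'(m) = P(m)$ for $1 \le m \le m_0$, and $P'(m) = \frac{1}{\gamma}Q(m)$ for $m_0 < m \le \ell_s\ell_t$, where $a = \sum_{m_0 < m \le \ell_s\ell_t}[P(m) - \frac1\gamma Q(m)]$; define $Q' = \frac{1}{1-\gamma}(Q - \gamma P')$. Then $P'$ and $Q'$ are probability mass functions, and $d_{TV}(P', P) \le 4(8q\ell^2)^{m_0+1}$. -/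

import Mathlib

open Finset

lemma aux_sum_pmf (x : ℝ) (n : ℕ) :
    ∑ m ∈ Finset.range (n + 1), (n.choose m : ℝ) * x ^ m * (1 - x) ^ (n - m) = 1 := by
  have h := add_pow x (1 - x) n
  have hx : x + (1 - x) = 1 := by ring
  rw [hx, one_pow] at h
  rw [show ∑ m ∈ Finset.range (n + 1), (n.choose m : ℝ) * x ^ m * (1 - x) ^ (n - m)
      = ∑ m ∈ Finset.range (n + 1), x ^ m * (1 - x) ^ (n - m) * (n.choose m : ℝ) from
    Finset.sum_congr rfl fun m _ => by ring, ← h]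

lemma aux_tail (x : ℝ) (hx0 : 0 ≤ x) (hx1 : x < 1) (k K : ℕ) :
    ∑ m ∈ Finset.Ico k K, x ^ m ≤ x ^ k / (1 - x) := by
  have h1x : 0 < 1 - x := by linarith
  rw [Finset.sum_Ico_eq_sum_range]
  calc ∑ i ∈ Finset.range (K - k), x ^ (k + i)
      = x ^ k * ∑ i ∈ Finset.range (K - k), x ^ i := by
        rw [Finset.mul_sum]; exact Finset.sum_congr rfl fun i _ => by rw [pow_add]
    _ ≤ x ^ k * (1 / (1 - x)) := by
        apply mul_le_mul_of_nonneg_left _ (pow_nonneg hx0 k)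
        rw [geom_sum_eq (by linarith : x ≠ 1)]
        rw [show (x ^ (K - k) - 1) / (x - 1) = (1 - x ^ (K - k)) / (1 - x) by
          rw [← neg_div_neg_eq]; ring_nf]
        gcongr
        have := pow_nonneg hx0 (K - k); linarith
    _ = x ^ k / (1 - x) := by ring

set_option maxHeartbeats 2000000 in
/-- Key lemma of the planted-clique reduction: the modified distributions `P'`
and `Q'` are well-defined pmfs on `{0,…,ℓsℓt}`, `(1-γ)Q' + γP' = Q`, and
`d_TV(P',P) ≤ 4(8qℓ²)^{m₀+1}`. -/
theorem stmt_10 (ℓ ℓs ℓt : ℕ) (hℓs : 1 ≤ ℓs) (hℓt : 1 ≤ ℓt)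
    (hls : ℓs ≤ 2 * ℓ) (hlt : ℓt ≤ 2 * ℓ)
    (q γ : ℝ) (hq0 : 0 ≤ q) (hq : 16 * q * ℓ ^ 2 ≤ 1)
    (hγ0 : 0 < γ) (hγ : γ ≤ 1 / 2)
    (m₀ : ℕ) (hm₀ : m₀ = ⌊Real.logb 2 (1 / γ)⌋₊)
    (n : ℕ) (hn : n = ℓs * ℓt)
    (P Q P' Q' : ℕ → ℝ) (a : ℝ)
    (hP : ∀ m, P m = (n.choose m : ℝ) * (2 * q) ^ m * (1 - 2 * q) ^ (n - m))
    (hQ : ∀ m, Q m = (n.choose m : ℝ) * q ^ m * (1 - q) ^ (n - m))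
    (ha : a = ∑ m ∈ Finset.Ico (m₀ + 1) (n + 1), (P m - Q m / γ))
    (hP' : ∀ m, P' m =
      if m = 0 then P 0 + a else if m ≤ m₀ then P m else Q m / γ)
    (hQ' : ∀ m, Q' m = (Q m - γ * P' m) / (1 - γ)) :
    (∀ m ≤ n, 0 ≤ P' m) ∧ (∀ m ≤ n, 0 ≤ Q' m) ∧
      (∑ m ∈ Finset.range (n + 1), P' m = 1) ∧
      (∑ m ∈ Finset.range (n + 1), Q' m = 1) ∧
      (1 / 2) * ∑ m ∈ Finset.range (n + 1), |P' m - P m|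
        ≤ 4 * (8 * q * ℓ ^ 2) ^ (m₀ + 1) := by
  -- basic numeric facts
  have hl1 : 1 ≤ ℓ := by omega
  have hlR : (1 : ℝ) ≤ (ℓ : ℝ) := by exact_mod_cast hl1
  have hq16 : q ≤ 1 / 16 := by nlinarith [mul_nonneg hq0 (by nlinarith : (0:ℝ) ≤ (ℓ:ℝ) ^ 2 - 1)]
  set X : ℝ := 8 * q * (ℓ : ℝ) ^ 2 with hXdef
  have hX0 : 0 ≤ X := by positivity
  have hX2 : X ≤ 1 / 2 := by simp only [hXdef]; linarith
  have hnN : n ≤ 4 * ℓ ^ 2 := by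
    rw [hn]; calc ℓs * ℓt ≤ (2 * ℓ) * (2 * ℓ) := Nat.mul_le_mul hls hlt
      _ = 4 * ℓ ^ 2 := by ring
  have hnR : (n : ℝ) ≤ 4 * (ℓ : ℝ) ^ 2 := by exact_mod_cast hnN
  have hnq : (n : ℝ) * q ≤ X / 2 := by
    simp only [hXdef]; nlinarith [mul_le_mul_of_nonneg_right hnR hq0]
  have hnq0 : 0 ≤ (n : ℝ) * q := by positivity
  have hnq4 : (n : ℝ) * q ≤ 1 / 4 := by linarith
  have hq2 : 0 ≤ 1 - 2 * q := by linarith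
  have hq1 : 0 ≤ 1 - q := by linarith
  -- γ and m₀ facts
  have hγinv : (2 : ℝ) ≤ 1 / γ := by rw [le_div_iff₀ hγ0]; linarith
  have hγinv0 : (0 : ℝ) < 1 / γ := by linarith
  have hlogb1 : (1 : ℝ) ≤ Real.logb 2 (1 / γ) := by
    have := (Real.logb_le_logb (by norm_num : (1:ℝ) < 2) (by norm_num : (0:ℝ) < 2) hγinv0).mpr hγinv
    rwa [Real.logb_self_eq_one (by norm_num)] at this
  have hm1 : 1 ≤ m₀ := by
    rw [hm₀]; exact Nat.le_floor (by exact_mod_cast hlogb1)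
  have h2m₀ : (2 : ℝ) ^ m₀ ≤ 1 / γ := by
    have h1 : ((m₀ : ℝ)) ≤ Real.logb 2 (1 / γ) := by
      rw [hm₀]; exact Nat.floor_le (by linarith)
    calc (2 : ℝ) ^ m₀ = (2 : ℝ) ^ ((m₀ : ℝ)) := by rw [Real.rpow_natCast]
      _ ≤ (2 : ℝ) ^ (Real.logb 2 (1 / γ)) :=
        Real.rpow_le_rpow_of_exponent_le (by norm_num) h1
      _ = 1 / γ := Real.rpow_logb (by norm_num) (by norm_num) hγinv0
  have h2m₀' : 1 / γ ≤ (2 : ℝ) ^ (m₀ + 1) := by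
    have h1 : Real.logb 2 (1 / γ) ≤ ((m₀ + 1 : ℕ) : ℝ) := by
      rw [hm₀]; push_cast; exact (Nat.lt_floor_add_one _).le
    calc 1 / γ = (2 : ℝ) ^ (Real.logb 2 (1 / γ)) :=
        (Real.rpow_logb (by norm_num) (by norm_num) hγinv0).symm
      _ ≤ (2 : ℝ) ^ (((m₀ + 1 : ℕ) : ℝ)) := Real.rpow_le_rpow_of_exponent_le (by norm_num) h1
      _ = (2 : ℝ) ^ (m₀ + 1) := by rw [Real.rpow_natCast]
  have hγ2 : γ * (2 : ℝ) ^ m₀ ≤ 1 := by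
    rw [div_eq_mul_inv, one_mul] at h2m₀
    calc γ * (2:ℝ) ^ m₀ ≤ γ * γ⁻¹ := mul_le_mul_of_nonneg_left h2m₀ hγ0.le
      _ = 1 := mul_inv_cancel₀ hγ0.ne'
  -- pointwise bounds
  have hPnn : ∀ m, 0 ≤ P m := by intro m; rw [hP]; positivity
  have hQnn : ∀ m, 0 ≤ Q m := by intro m; rw [hQ]; positivity
  have hchoose : ∀ m, (n.choose m : ℝ) ≤ (n : ℝ) ^ m := by
    intro m; exact_mod_cast Nat.choose_le_pow n m
  have hPle : ∀ m, P m ≤ X ^ m := by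
    intro m
    rw [hP]
    calc (n.choose m : ℝ) * (2 * q) ^ m * (1 - 2 * q) ^ (n - m)
        ≤ (n : ℝ) ^ m * (2 * q) ^ m * 1 := by
          apply mul_le_mul (mul_le_mul (hchoose m) le_rfl (by positivity) (by positivity))
            (pow_le_one₀ hq2 (by linarith)) (by positivity) (by positivity)
      _ = ((n : ℝ) * (2 * q)) ^ m := by rw [mul_one, ← mul_pow]
      _ ≤ X ^ m := pow_le_pow_left₀ (by positivity) (by linarith) m
  have hQle : ∀ m, Q m ≤ ((n : ℝ) * q) ^ m := by
    intro m
    rw [hQ]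
    calc (n.choose m : ℝ) * q ^ m * (1 - q) ^ (n - m)
        ≤ (n : ℝ) ^ m * q ^ m * 1 := by
          apply mul_le_mul (mul_le_mul (hchoose m) le_rfl (by positivity) (by positivity))
            (pow_le_one₀ hq1 (by linarith)) (by positivity) (by positivity)
      _ = ((n : ℝ) * q) ^ m := by rw [mul_one, ← mul_pow]
  have hPQ : ∀ m, P m ≤ 2 ^ m * Q m := by
    intro m
    rw [hP, hQ]
    have h1 : (1 - 2 * q) ^ (n - m) ≤ (1 - q) ^ (n - m) :=
      pow_le_pow_left₀ hq2 (by linarith) _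
    calc (n.choose m : ℝ) * (2 * q) ^ m * (1 - 2 * q) ^ (n - m)
        ≤ (n.choose m : ℝ) * (2 * q) ^ m * (1 - q) ^ (n - m) := by
          apply mul_le_mul_of_nonneg_left h1 (by positivity)
      _ = 2 ^ m * ((n.choose m : ℝ) * q ^ m * (1 - q) ^ (n - m)) := by
          rw [mul_pow]; ring
  -- total sums
  have hsumP : ∑ m ∈ Finset.range (n + 1), P m = 1 := by
    rw [Finset.sum_congr rfl fun m _ => hP m]
    have := aux_sum_pmf (2 * q) n
    simpa using this
  have hsumQ : ∑ m ∈ Finset.range (n + 1), Q m = 1 := by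
    rw [Finset.sum_congr rfl fun m _ => hQ m]
    exact aux_sum_pmf q n
  -- tail sums
  set SP : ℝ := ∑ m ∈ Finset.Ico (m₀ + 1) (n + 1), P m with hSPdef
  set SQ : ℝ := ∑ m ∈ Finset.Ico (m₀ + 1) (n + 1), Q m with hSQdef
  have hSP0 : 0 ≤ SP := Finset.sum_nonneg fun m _ => hPnn m
  have hSQ0 : 0 ≤ SQ := Finset.sum_nonneg fun m _ => hQnn m
  have hXpow0 : 0 ≤ X ^ (m₀ + 1) := by positivity
  have hSP : SP ≤ 2 * X ^ (m₀ + 1) := by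
    calc SP ≤ ∑ m ∈ Finset.Ico (m₀ + 1) (n + 1), X ^ m :=
        Finset.sum_le_sum fun m _ => hPle m
      _ ≤ X ^ (m₀ + 1) / (1 - X) := aux_tail X hX0 (by linarith) _ _
      _ ≤ 2 * X ^ (m₀ + 1) := by
          rw [div_le_iff₀ (by linarith : (0:ℝ) < 1 - X)]
          nlinarith [mul_nonneg hXpow0 (show (0:ℝ) ≤ 1 - 2 * X by linarith)]
  have hSQγ : SQ / γ ≤ 4 / 3 * X ^ (m₀ + 1) := by
    have h1 : SQ ≤ 4 / 3 * ((n : ℝ) * q) ^ (m₀ + 1) := by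
      calc SQ ≤ ∑ m ∈ Finset.Ico (m₀ + 1) (n + 1), ((n : ℝ) * q) ^ m :=
          Finset.sum_le_sum fun m _ => hQle m
        _ ≤ ((n : ℝ) * q) ^ (m₀ + 1) / (1 - (n : ℝ) * q) := aux_tail _ hnq0 (by linarith) _ _
        _ ≤ 4 / 3 * ((n : ℝ) * q) ^ (m₀ + 1) := by
            rw [div_le_iff₀ (by linarith : (0:ℝ) < 1 - (n:ℝ) * q)]
            nlinarith [mul_nonneg (pow_nonneg hnq0 (m₀ + 1))
              (show (0:ℝ) ≤ 1 - 4 * ((n:ℝ) * q) by linarith)]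
    calc SQ / γ = SQ * (1 / γ) := by ring
      _ ≤ (4 / 3 * ((n : ℝ) * q) ^ (m₀ + 1)) * (2 : ℝ) ^ (m₀ + 1) :=
        mul_le_mul h1 h2m₀' (by positivity) (by positivity)
      _ = 4 / 3 * (2 * ((n : ℝ) * q)) ^ (m₀ + 1) := by rw [mul_pow]; ring
      _ ≤ 4 / 3 * X ^ (m₀ + 1) := by
          apply mul_le_mul_of_nonneg_left _ (by norm_num)
          exact pow_le_pow_left₀ (by positivity) (by linarith) _
  have ha' : a = SP - SQ / γ := by
    rw [ha, Finset.sum_sub_distrib, ← Finset.sum_div]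
  have hXq : X ^ (m₀ + 1) ≤ 1 / 4 := by
    calc X ^ (m₀ + 1) ≤ (1 / 2 : ℝ) ^ (m₀ + 1) := pow_le_pow_left₀ hX0 hX2 _
      _ ≤ (1 / 2 : ℝ) ^ 2 := pow_le_pow_of_le_one (by norm_num) (by norm_num) (by omega)
      _ = 1 / 4 := by norm_num
  -- P 0 lower bound
  have hP0 : 1 / 2 ≤ P 0 := by
    have h1 : 1 + (n : ℝ) * (-(2 * q)) ≤ (1 + -(2 * q)) ^ n :=
      one_add_mul_le_pow (by linarith) n
    rw [hP]
    simp only [Nat.choose_zero_right, pow_zero, Nat.cast_one, one_mul, Nat.sub_zero]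
    have h2 : (n : ℝ) * (2 * q) ≤ X := by nlinarith
    calc (1 / 2 : ℝ) ≤ 1 - X := by linarith
      _ ≤ 1 + (n : ℝ) * (-(2 * q)) := by nlinarith
      _ ≤ (1 + -(2 * q)) ^ n := h1
      _ = (1 - 2 * q) ^ n := by ring_nf
  have hQ0 : P 0 ≤ Q 0 := by
    rw [hP, hQ]
    simp only [Nat.choose_zero_right, pow_zero, Nat.cast_one, one_mul, Nat.sub_zero]
    exact pow_le_pow_left₀ hq2 (by linarith) n
  -- the a bounds
  have haub : a ≤ SP := by
    have h0 : 0 ≤ SQ / γ := div_nonneg hSQ0 hγ0.le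
    rw [ha']; linarith
  have halb : -(4 / 3 * X ^ (m₀ + 1)) ≤ a := by rw [ha']; linarith
  -- decomposition of sums over range (n+1)
  have hsub : Finset.Ico (m₀ + 1) (n + 1) ⊆ Finset.Ico 1 (n + 1) := by
    intro x hx; simp only [Finset.mem_Ico] at *; omega
  have hsplit : ∀ f : ℕ → ℝ, (∀ m, 1 ≤ m → m ≤ m₀ → f m = 0) →
      ∑ m ∈ Finset.range (n + 1), f m = f 0 + ∑ m ∈ Finset.Ico (m₀ + 1) (n + 1), f m := by
    intro f hf
    rw [Finset.sum_range_eq_add_Ico f (Nat.succ_pos n)]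
    congr 1
    refine (Finset.sum_subset hsub ?_).symm
    intro x hx1 hx2
    simp only [Finset.mem_Ico] at hx1 hx2
    exact hf x hx1.1 (by omega)
  -- sum of P' is 1
  have hP'0 : P' 0 = P 0 + a := by rw [hP']; simp
  have hP'mid : ∀ m, 1 ≤ m → m ≤ m₀ → P' m = P m := by
    intro m h1 h2; rw [hP']; rw [if_neg (by omega), if_pos h2]
  have hP'top : ∀ m, m₀ + 1 ≤ m → P' m = Q m / γ := by
    intro m h1; rw [hP']; rw [if_neg (by omega), if_neg (by omega)]
  have hkey : ∑ m ∈ Finset.range (n + 1), (P' m - P m) = 0 := by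
    rw [hsplit (fun m => P' m - P m) (fun m h1 h2 => by show P' m - P m = 0; rw [hP'mid m h1 h2]; ring)]
    have h2 : ∑ m ∈ Finset.Ico (m₀ + 1) (n + 1), (P' m - P m)
        = SQ / γ - SP := by
      rw [show ∑ m ∈ Finset.Ico (m₀ + 1) (n + 1), (P' m - P m)
          = ∑ m ∈ Finset.Ico (m₀ + 1) (n + 1), (Q m / γ - P m) from
        Finset.sum_congr rfl fun m hm => by
          rw [hP'top m (Finset.mem_Ico.mp hm).1]]
      rw [Finset.sum_sub_distrib, ← Finset.sum_div]
    rw [h2, hP'0, ha']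
    ring
  have hsumP' : ∑ m ∈ Finset.range (n + 1), P' m = 1 := by
    have h1 : ∑ m ∈ Finset.range (n + 1), (P' m - P m)
        = ∑ m ∈ Finset.range (n + 1), P' m - ∑ m ∈ Finset.range (n + 1), P m :=
      Finset.sum_sub_distrib _ _
    rw [h1, hsumP] at hkey
    linarith
  refine ⟨?_, ?_, hsumP', ?_, ?_⟩
  · -- P' nonneg
    intro m _
    rw [hP']
    split_ifs with h0 hm
    · nlinarith
    · exact hPnn m
    · exact div_nonneg (hQnn m) hγ0.le
  · -- Q' nonneg
    intro m _
    rw [hQ']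
    apply div_nonneg _ (by linarith)
    rw [hP']
    split_ifs with h0 hm
    · -- m = 0
      have hγa : γ * a ≤ 1 / 4 := by
        have h1 : γ * a ≤ γ * SP := mul_le_mul_of_nonneg_left haub hγ0.le
        have h2 : γ * SP ≤ (1 / 2) * (2 * X ^ (m₀ + 1)) :=
          mul_le_mul hγ hSP hSP0 (by norm_num)
        nlinarith
      have hγP0 : γ * P 0 ≤ (1 / 2) * Q 0 :=
        mul_le_mul hγ hQ0 (hPnn 0) (by norm_num)
      have hQ00 : 1 / 2 ≤ Q 0 := le_trans hP0 hQ0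
      subst h0
      have hexp : γ * (P 0 + a) = γ * P 0 + γ * a := by ring
      linarith
    · -- 1 ≤ m ≤ m₀
      have h1 : (2 : ℝ) ^ m ≤ 2 ^ m₀ := pow_le_pow_right₀ (by norm_num) hm
      have h3 : γ * P m ≤ γ * (2 ^ m₀ * Q m) := by
        apply mul_le_mul_of_nonneg_left _ hγ0.le
        calc P m ≤ 2 ^ m * Q m := hPQ m
          _ ≤ 2 ^ m₀ * Q m := mul_le_mul_of_nonneg_right h1 (hQnn m)
      have h4 : γ * (2 ^ m₀ * Q m) = γ * 2 ^ m₀ * Q m := by ring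
      have h5 : γ * 2 ^ m₀ * Q m ≤ 1 * Q m := mul_le_mul_of_nonneg_right hγ2 (hQnn m)
      linarith
    · -- m > m₀
      rw [mul_div_cancel₀ _ hγ0.ne']
      linarith
  · -- sum of Q' is 1
    rw [Finset.sum_congr rfl fun m _ => hQ' m, ← Finset.sum_div,
      Finset.sum_sub_distrib, ← Finset.mul_sum, hsumQ, hsumP', mul_one]
    exact div_self (ne_of_gt (by linarith))
  · -- TV bound
    have habs : |a| ≤ SP + SQ / γ := by
      rw [ha']
      calc |SP - SQ / γ| ≤ |SP| + |SQ / γ| := abs_sub _ _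
        _ = SP + SQ / γ := by
            rw [abs_of_nonneg hSP0, abs_of_nonneg (by positivity : (0:ℝ) ≤ SQ / γ)]
    have h1 : ∑ m ∈ Finset.range (n + 1), |P' m - P m|
        = |a| + ∑ m ∈ Finset.Ico (m₀ + 1) (n + 1), |P' m - P m| := by
      rw [hsplit (fun m => |P' m - P m|) (fun m hm1 hm2 => by
        show |P' m - P m| = 0
        rw [hP'mid m hm1 hm2]; simp)]
      rw [hP'0]
      congr 1
      rw [show P 0 + a - P 0 = a by ring]
    have h2 : ∑ m ∈ Finset.Ico (m₀ + 1) (n + 1), |P' m - P m| ≤ SQ / γ + SP := by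
      calc ∑ m ∈ Finset.Ico (m₀ + 1) (n + 1), |P' m - P m|
          ≤ ∑ m ∈ Finset.Ico (m₀ + 1) (n + 1), (Q m / γ + P m) := by
            apply Finset.sum_le_sum
            intro m hm
            rw [hP'top m (Finset.mem_Ico.mp hm).1]
            calc |Q m / γ - P m| ≤ |Q m / γ| + |P m| := abs_sub _ _
              _ = Q m / γ + P m := by
                  rw [abs_of_nonneg (div_nonneg (hQnn m) hγ0.le), abs_of_nonneg (hPnn m)]
        _ = SQ / γ + SP := by rw [Finset.sum_add_distrib, ← Finset.sum_div]
    rw [h1]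
    linarith
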